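/- arXiv:1103.2102 — 2 statements merged into one kernel-verified Lean document; each statement's English description precedes it below -/
import Mathlib

section
/- Let d ≥ 2 and let ε ∈ (0,1) and z ∈ [0,1]^d with V_z > ε. Then λ^d(A_ε(z)) ≥ (1/d!) · ε^d / V_z^{d−1} ≥ ε^d/d!. -/
open Finset MeasureTheory ENNReal

noncomputable def starVol {d : ℕ} (y : Fin d → ℝ) : ℝ := ∏ j, y j

def Aeps (d : ℕ) (ε : ℝ) (z : Fin d → ℝ) : Set (Fin d → ℝ) :=
  {x | (∀ j, x j ∈ Set.Icc (0 : ℝ) 1) ∧ (∀ j, x j ≤ z j) ∧ starVol z - starVol x ≤ ε}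

lemma weier {ι : Type*} (s : Finset ι) (v : ι → ℝ) (h0 : ∀ i ∈ s, 0 ≤ v i)
    (h1 : ∀ i ∈ s, v i ≤ 1) : 1 - ∑ i ∈ s, v i ≤ ∏ i ∈ s, (1 - v i) := by
  induction s using Finset.cons_induction with
  | empty => simp
  | cons a s ha ih =>
    rw [Finset.prod_cons, Finset.sum_cons]
    have h0' := fun i hi => h0 i (Finset.mem_cons_of_mem hi)
    have h1' := fun i hi => h1 i (Finset.mem_cons_of_mem hi)
    have ihs := ih h0' h1'
    have hva0 : 0 ≤ v a := h0 a (Finset.mem_cons_self a s)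
    have hva1 : v a ≤ 1 := h1 a (Finset.mem_cons_self a s)
    have hs0 : 0 ≤ ∑ i ∈ s, v i := Finset.sum_nonneg h0'
    nlinarith [mul_le_mul_of_nonneg_left ihs (by linarith : (0:ℝ) ≤ 1 - v a)]

lemma simplex_lb (d : ℕ) (hd : 0 < d) (r : ℝ) (hr : 0 ≤ r) :
    ENNReal.ofReal (r ^ d / d.factorial) ≤
      volume {v : Fin d → ℝ | (∀ i, 0 ≤ v i) ∧ ∑ i, v i ≤ r} := by
  have hne : Nonempty (Fin d) := ⟨⟨0, hd⟩⟩
  set S := {v : Fin d → ℝ | (∀ i, 0 ≤ v i) ∧ ∑ i, v i ≤ r} with hS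
  have hSm : MeasurableSet S := by
    have : S = (⋂ i, {v : Fin d → ℝ | 0 ≤ v i}) ∩ {v : Fin d → ℝ | ∑ i, v i ≤ r} := by
      ext v; simp [hS, Set.mem_iInter]
    rw [this]
    exact (MeasurableSet.iInter fun i =>
      measurableSet_le measurable_const (measurable_pi_apply i)).inter
      (measurableSet_le (by fun_prop) measurable_const)
  have hball : volume {x : Fin d → ℝ | ∑ i, |x i| ≤ r}
      = ENNReal.ofReal r ^ d * ENNReal.ofReal (2 ^ d / d.factorial) := by
    have h := MeasureTheory.volume_sum_rpow_le (Fin d) (le_refl (1:ℝ)) r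
    have hg2 : Real.Gamma (1/1 + 1) = 1 := by
      rw [show (1/1 + 1 : ℝ) = (1:ℕ)+1 by norm_num, Real.Gamma_nat_eq_factorial]; simp
    have hgd : Real.Gamma ((Fintype.card (Fin d) : ℝ) / 1 + 1) = d.factorial := by
      rw [Fintype.card_fin, div_one, Real.Gamma_nat_eq_factorial]
    rw [hg2, hgd] at h
    norm_num [Real.rpow_one, Fintype.card_fin] at h
    exact h
  set f : (Fin d → Bool) → (Fin d → ℝ) → (Fin d → ℝ) :=
    fun σ x i => if σ i then x i else -x i with hf
  have hmp : ∀ σ : Fin d → Bool, MeasurePreserving (f σ) volume volume := by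
    intro σ
    exact volume_preserving_pi (fun i : Fin d =>
      (show MeasurePreserving (fun t : ℝ => if σ i then t else -t) volume volume by
        cases hσ : σ i
        · simpa [hσ] using Measure.measurePreserving_neg (volume : Measure ℝ)
        · convert MeasurePreserving.id (volume : Measure ℝ) using 1
          funext t; simp [hσ]))
  have hcover : {x : Fin d → ℝ | ∑ i, |x i| ≤ r} ⊆ ⋃ σ : Fin d → Bool, f σ ⁻¹' S := by
    intro x hx
    refine Set.mem_iUnion.2 ⟨fun i => decide (0 ≤ x i), ?_⟩
    have habs : ∀ i, f (fun i => decide (0 ≤ x i)) x i = |x i| := by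
      intro i; by_cases h : 0 ≤ x i
      · simp [hf, h, abs_of_nonneg h]
      · simp [hf, h, abs_of_neg (lt_of_not_ge h)]
    refine ⟨fun i => by rw [habs i]; exact abs_nonneg _, ?_⟩
    simpa [habs] using hx
  have key : volume {x : Fin d → ℝ | ∑ i, |x i| ≤ r} ≤ (2:ℝ≥0∞) ^ d * volume S := by
    calc volume {x : Fin d → ℝ | ∑ i, |x i| ≤ r}
        ≤ volume (⋃ σ : Fin d → Bool, f σ ⁻¹' S) := measure_mono hcover
      _ ≤ ∑' σ : (Fin d → Bool), volume (f σ ⁻¹' S) := measure_iUnion_le _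
      _ = ∑' _σ : (Fin d → Bool), volume S := by
          congr 1; ext σ; exact (hmp σ).measure_preimage hSm.nullMeasurableSet
      _ = (2:ℝ≥0∞) ^ d * volume S := by
          rw [tsum_fintype, Finset.sum_const, Finset.card_univ]
          simp [Fintype.card_fun, nsmul_eq_mul]
  have h2 : ENNReal.ofReal r ^ d * ENNReal.ofReal (2 ^ d / d.factorial)
      = (2:ℝ≥0∞)^d * ENNReal.ofReal (r^d / d.factorial) := by
    rw [← ENNReal.ofReal_pow hr, ← ENNReal.ofReal_mul (by positivity),
        show ((2:ℝ≥0∞))^d = ENNReal.ofReal (2^d) by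
          rw [ENNReal.ofReal_pow (by norm_num : (0:ℝ) ≤ 2)]; norm_num,
        ← ENNReal.ofReal_mul (by positivity)]
    congr 1; ring
  have key2 : (2:ℝ≥0∞)^d * ENNReal.ofReal (r^d / d.factorial) ≤ (2:ℝ≥0∞)^d * volume S := by
    rw [← h2, ← hball]; exact key
  exact (ENNReal.mul_le_mul_iff_right (by positivity) (ENNReal.pow_ne_top ENNReal.ofNat_ne_top)).mp key2

/-- For `d ≥ 2`, `ε ∈ (0,1)` and `z ∈ [0,1]^d` with `V_z > ε`,
`λ^d(A_ε(z)) ≥ (1/d!)·ε^d/V_z^{d-1} ≥ ε^d/d!`. -/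
theorem stmt16 (d : ℕ) (hd : 2 ≤ d) (ε : ℝ) (hε : ε ∈ Set.Ioo (0 : ℝ) 1)
    (z : Fin d → ℝ) (hz : ∀ j, z j ∈ Set.Icc (0 : ℝ) 1) (hV : ε < starVol z) :
    ENNReal.ofReal ((1 / (d.factorial : ℝ)) * ε ^ d / starVol z ^ (d - 1)) ≤
      volume (Aeps d ε z) ∧
    ε ^ d / (d.factorial : ℝ) ≤ (1 / (d.factorial : ℝ)) * ε ^ d / starVol z ^ (d - 1) := by
  obtain ⟨hε0, hε1⟩ := hε
  have hV0 : 0 < starVol z := lt_trans hε0 hV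
  set V := starVol z with hVdef
  have hzpos : ∀ j, 0 < z j := by
    intro j
    rcases lt_or_eq_of_le (hz j).1 with h | h
    · exact h
    · exfalso
      have : V = 0 := by
        rw [hVdef, starVol]; exact Finset.prod_eq_zero (Finset.mem_univ j) h.symm
      linarith
  have hV1 : V ≤ 1 := Finset.prod_le_one (fun j _ => (hz j).1) (fun j _ => (hz j).2)
  set c := ε / V with hc
  have hc0 : 0 < c := div_pos hε0 hV0
  have hc1 : c < 1 := (div_lt_one hV0).mpr hV
  have hfact : (0:ℝ) < d.factorial := by positivity
  have hVd : V ^ d = V ^ (d-1) * V := by rw [← pow_succ]; congr 1; omega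
  have hreal : V * (c ^ d / d.factorial) = (1 / d.factorial) * ε ^ d / V ^ (d-1) := by
    rw [hc, div_pow, hVd]
    field_simp
  constructor
  · set S := {v : Fin d → ℝ | (∀ i, 0 ≤ v i) ∧ ∑ i, v i ≤ c} with hS
    set L := Matrix.toLin' (Matrix.diagonal fun j : Fin d => -(z j)) with hL
    have hLapp : ∀ (v : Fin d → ℝ) (j : Fin d), L v j = -(z j) * v j := by
      intro v j
      simp [hL, Matrix.toLin'_apply, Matrix.mulVec_diagonal]
    have hdet : LinearMap.det L = ∏ j, -(z j) := by
      rw [hL, LinearMap.det_toLin', Matrix.det_diagonal]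
    have hsub : (fun v => z + L v) '' S ⊆ Aeps d ε z := by
      rintro x ⟨v, ⟨hv0, hvs⟩, rfl⟩
      have hx : ∀ j, (z + L v) j = z j * (1 - v j) := by
        intro j; rw [Pi.add_apply, hLapp]; ring
      have hvle : ∀ j, v j ≤ c := fun j =>
        le_trans (Finset.single_le_sum (fun i _ => hv0 i) (Finset.mem_univ j)) hvs
      have hv1 : ∀ j, v j ≤ 1 := fun j => le_trans (hvle j) hc1.le
      have hprod : starVol (z + L v) = V * ∏ j, (1 - v j) := by
        rw [starVol, Finset.prod_congr rfl (fun j _ => hx j), Finset.prod_mul_distrib]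
        rfl
      have hwei : 1 - ∑ j, v j ≤ ∏ j, (1 - v j) :=
        weier Finset.univ v (fun i _ => hv0 i) (fun i _ => hv1 i)
      refine ⟨?_, ?_, ?_⟩
      · intro j
        show (z + L v) j ∈ Set.Icc (0:ℝ) 1
        rw [hx j]
        constructor
        · exact mul_nonneg (hzpos j).le (by linarith [hv1 j])
        · nlinarith [(hz j).2, hv0 j, (hzpos j).le]
      · intro j; show (z + L v) j ≤ z j; rw [hx j]; nlinarith [hv0 j, (hzpos j).le]
      · rw [hprod]
        have h1 : 1 - c ≤ ∏ j, (1 - v j) := le_trans (by linarith) hwei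
        have h2 : V * (1 - c) ≤ V * ∏ j, (1 - v j) :=
          mul_le_mul_of_nonneg_left h1 hV0.le
        have h3 : V * (1 - c) = V - ε := by
          rw [hc]; field_simp
        linarith
    have himg : volume ((fun v => z + L v) '' S) = ENNReal.ofReal V * volume S := by
      have he : (fun v => z + L v) '' S = (fun y => z + y) '' (L '' S) := by
        rw [Set.image_image]
      rw [he, Set.image_add_left, measure_preimage_add,
        Measure.addHaar_image_linearMap, hdet]
      have habs : |∏ j, -(z j)| = V := by
        rw [abs_prod, hVdef, starVol]
        exact Finset.prod_congr rfl fun j _ => by rw [abs_neg, abs_of_pos (hzpos j)]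
      rw [habs]
    calc ENNReal.ofReal ((1 / (d.factorial : ℝ)) * ε ^ d / V ^ (d - 1))
        = ENNReal.ofReal (V * (c ^ d / d.factorial)) := by rw [hreal]
      _ = ENNReal.ofReal V * ENNReal.ofReal (c ^ d / d.factorial) :=
          ENNReal.ofReal_mul hV0.le
      _ ≤ ENNReal.ofReal V * volume S :=
          mul_le_mul_right (simplex_lb d (by omega) c hc0.le) _
      _ = volume ((fun v => z + L v) '' S) := himg.symm
      _ ≤ volume (Aeps d ε z) := measure_mono hsub
  · have hVpow : 0 < V ^ (d-1) := pow_pos hV0 _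
    have hVpow1 : V ^ (d-1) ≤ 1 := pow_le_one₀ hV0.le hV1
    calc ε ^ d / (d.factorial : ℝ) = (1 / d.factorial) * ε ^ d / 1 := by ring
      _ ≤ (1 / d.factorial) * ε ^ d / V ^ (d-1) :=
          div_le_div_of_nonneg_left (by positivity) hVpow hVpow1
end

section
/- Let d be a positive integer, ε ∈ (0,1], and z ∈ [0,1]^d with V_z ≥ d·ε. Then λ^d(A_ε(z)) ≤ (5/(2·d!)) · ε^d / V_z^{d−1}. -/
open Finset MeasureTheory

lemma simplex_meas (d : ℕ) (T : ℝ) :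
    MeasurableSet {v : Fin d → ℝ | (∀ j, 0 ≤ v j) ∧ ∑ j, v j ≤ T} := by
  have h1 : MeasurableSet {v : Fin d → ℝ | ∀ j, 0 ≤ v j} := by
    have h : {v : Fin d → ℝ | ∀ j, 0 ≤ v j} = ⋂ j, {v : Fin d → ℝ | 0 ≤ v j} := by
      ext v; simp
    rw [h]
    exact MeasurableSet.iInter fun j => measurableSet_le measurable_const (measurable_pi_apply j)
  have h2 : MeasurableSet {v : Fin d → ℝ | ∑ j, v j ≤ T} :=
    measurableSet_le (Finset.measurable_sum _ fun j _ => measurable_pi_apply j) measurable_const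
  exact h1.inter h2

lemma simplex_vol (d : ℕ) (T : ℝ) (hT : 0 ≤ T) :
    volume {v : Fin d → ℝ | (∀ j, 0 ≤ v j) ∧ ∑ j, v j ≤ T}
      ≤ ENNReal.ofReal (T ^ d / d.factorial) := by
  induction d generalizing T with
  | zero =>
    have h : {v : Fin 0 → ℝ | (∀ j, 0 ≤ v j) ∧ ∑ j, v j ≤ T} = Set.univ := by
      ext v; simp [hT]
    rw [h]
    have h2 : (volume (Set.univ : Set (Fin 0 → ℝ))) = 1 := by
      simp [volume_pi, Measure.pi_univ]
    rw [h2]; simp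
  | succ n ih =>
    set S := {v : Fin (n+1) → ℝ | (∀ j, 0 ≤ v j) ∧ ∑ j, v j ≤ T} with hS
    have hmS := simplex_meas (n+1) T
    set e := MeasurableEquiv.piFinSuccAbove (fun _ : Fin (n+1) => ℝ) 0 with he
    have hmp := (measurePreserving_piFinSuccAbove (fun _ : Fin (n+1) => (volume : Measure ℝ)) 0).symm
    have hvol : volume S
        = ((volume : Measure ℝ).prod (Measure.pi fun _ : Fin n => volume)) (e.symm ⁻¹' S) := by
      rw [volume_pi, ← hmp.measure_preimage hmS.nullMeasurableSet]
    have hpi : (Measure.pi fun _ : Fin n => (volume : Measure ℝ)) = (volume : Measure (Fin n → ℝ)) :=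
      volume_pi.symm
    have hmem : ∀ (t : ℝ) (w : Fin n → ℝ),
        ((t, w) ∈ e.symm ⁻¹' S) ↔ ((0 ≤ t ∧ ∀ j, 0 ≤ w j) ∧ t + ∑ j, w j ≤ T) := by
      intro t w
      have hcons : e.symm (t, w) = Fin.cons t w := by
        simp [he, MeasurableEquiv.piFinSuccAbove, Fin.insertNth_zero', Fin.consEquiv]
      have hfa : (∀ j : Fin (n+1), 0 ≤ Fin.cons (α := fun _ => ℝ) t w j)
          ↔ (0 ≤ t ∧ ∀ j, 0 ≤ w j) := by
        constructor
        · intro h; exact ⟨h 0, fun j => by simpa using h j.succ⟩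
        · rintro ⟨h0, h1⟩ j
          refine Fin.cases ?_ ?_ j <;> simp [h0, h1]
      have hsum : ∑ j, Fin.cons (α := fun _ => ℝ) t w j = t + ∑ j, w j := by
        simp [Fin.sum_univ_succ]
      simp only [Set.mem_preimage, hcons, hS, Set.mem_setOf_eq, hfa, hsum]
    rw [hvol, Measure.prod_apply (e.symm.measurable hmS)]
    have key : ∀ t : ℝ,
        (Measure.pi fun _ : Fin n => (volume : Measure ℝ)) (Prod.mk t ⁻¹' (e.symm ⁻¹' S))
        ≤ (Set.Icc 0 T).indicator (fun t => ENNReal.ofReal ((T - t) ^ n / n.factorial)) t := by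
      intro t
      by_cases ht : t ∈ Set.Icc (0:ℝ) T
      · rw [Set.indicator_of_mem ht, hpi]
        refine le_trans (measure_mono ?_) (ih (T - t) (by linarith [ht.2]))
        intro w hw
        have hw' := (hmem t w).mp hw
        exact ⟨hw'.1.2, by linarith [hw'.2]⟩
      · rw [Set.indicator_of_notMem ht]
        have hempty : (Prod.mk t ⁻¹' (e.symm ⁻¹' S)) = ∅ := by
          ext w
          simp only [Set.mem_empty_iff_false, iff_false]
          intro hw
          rcases (hmem t w).mp hw with ⟨⟨h0, hw0⟩, hsum⟩
          have : 0 ≤ ∑ j, w j := Finset.sum_nonneg fun j _ => hw0 j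
          simp only [Set.mem_Icc, not_and, not_le] at ht
          linarith [ht h0]
        rw [hempty]; simp
    calc ∫⁻ t, (Measure.pi fun _ : Fin n => (volume : Measure ℝ)) (Prod.mk t ⁻¹' (e.symm ⁻¹' S))
        ≤ ∫⁻ t, (Set.Icc 0 T).indicator (fun t => ENNReal.ofReal ((T - t) ^ n / n.factorial)) t :=
          lintegral_mono key
      _ = ∫⁻ t in Set.Icc 0 T, ENNReal.ofReal ((T - t) ^ n / n.factorial) :=
          lintegral_indicator measurableSet_Icc _
      _ = ENNReal.ofReal (∫ t in Set.Icc 0 T, (T - t) ^ n / n.factorial) := by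
          rw [ofReal_integral_eq_lintegral_ofReal]
          · exact (Continuous.integrableOn_Icc (by continuity))
          · filter_upwards [ae_restrict_mem measurableSet_Icc] with t ht
            have : (0:ℝ) ≤ (T - t) ^ n := pow_nonneg (by linarith [ht.2]) n
            positivity
      _ = ENNReal.ofReal (T ^ (n+1) / (n+1).factorial) := by
          congr 1
          rw [MeasureTheory.integral_Icc_eq_integral_Ioc,
            ← intervalIntegral.integral_of_le hT]
          have h1 : (∫ t in (0:ℝ)..T, (T - t) ^ n / n.factorial)
              = (∫ t in (0:ℝ)..T, (T - t) ^ n) / n.factorial := intervalIntegral.integral_div _ _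
          have h2 : (∫ t in (0:ℝ)..T, (T - t) ^ n) = ∫ x in (T - T)..(T - 0), x ^ n :=
            intervalIntegral.integral_comp_sub_left (fun x => x ^ n) T
          rw [h1, h2]
          simp only [sub_self, sub_zero]
          rw [integral_pow]
          rw [Nat.factorial_succ]
          push_cast
          field_simp
          simp

lemma exp_34 : Real.exp (3/4) ≤ 5/2 := by
  have h2 : (0.6931471803 : ℝ) < Real.log 2 := Real.log_two_gt_d9
  have h54 : Real.log (4/5) ≤ 4/5 - 1 := Real.log_le_sub_one_of_pos (by norm_num)
  have h54' : (1/5 : ℝ) ≤ Real.log (5/4) := by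
    have h : Real.log (5/4) = - Real.log (4/5) := by
      rw [← Real.log_inv]; norm_num
    linarith
  have hlog : Real.log (5/2) = Real.log 2 + Real.log (5/4) := by
    rw [← Real.log_mul (by norm_num) (by norm_num)]; norm_num
  have h34 : (3/4:ℝ) ≤ Real.log (5/2) := by rw [hlog]; linarith
  calc Real.exp (3/4) ≤ Real.exp (Real.log (5/2)) := Real.exp_le_exp.mpr h34
    _ = 5/2 := Real.exp_log (by norm_num)

lemma coeff_pow_le (d : ℕ) (hd : 2 ≤ d) :
    (1 + (1/(d:ℝ))/2 + (1/(d:ℝ))^2/3 + (1/(d:ℝ))^3/4 + 2*(1/(d:ℝ))^4) ^ d ≤ 5/2 := by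
  have hd0 : (0:ℝ) < d := by positivity
  rcases eq_or_lt_of_le hd with h2 | h3
  · rw [← h2]; norm_num
  · have hd3 : (3:ℝ) ≤ d := by exact_mod_cast h3
    set u := 1/(d:ℝ) with hu
    have hu0 : 0 < u := by positivity
    have hu3 : u ≤ 1/3 := by
      rw [hu]; rw [div_le_div_iff₀ hd0 (by norm_num)]; linarith
    have hc : 1 + u/2 + u^2/3 + u^3/4 + 2*u^4 ≤ 1 + (3/4)*u := by
      nlinarith [sq_nonneg u, pow_pos hu0 3, pow_pos hu0 4, mul_pos hu0 hu0]
    have hcpos : (0:ℝ) ≤ 1 + u/2 + u^2/3 + u^3/4 + 2*u^4 := by positivity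
    calc (1 + u/2 + u^2/3 + u^3/4 + 2*u^4) ^ d ≤ (1 + (3/4)*u)^d :=
          pow_le_pow_left₀ hcpos hc d
      _ ≤ (Real.exp ((3/4)*u))^d := by
          apply pow_le_pow_left₀ (by positivity)
          linarith [Real.add_one_le_exp ((3/4)*u)]
      _ = Real.exp (d * ((3/4)*u)) := by rw [← Real.exp_nat_mul]
      _ = Real.exp (3/4) := by
          congr 1
          rw [hu]
          field_simp
      _ ≤ 5/2 := exp_34

lemma neg_log_le (δ : ℝ) (h0 : 0 < δ) (h2 : δ ≤ 1/2) :
    -Real.log (1 - δ) ≤ δ + δ^2/2 + δ^3/3 + δ^4/4 + 2*δ^5 := by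
  have habs : |δ| < 1 := by rw [abs_of_pos h0]; linarith
  have h := Real.abs_log_sub_add_sum_range_le habs 4
  rw [abs_of_pos h0] at h
  have hsum : ∑ i ∈ Finset.range 4, δ^(i+1)/(i+1) = δ + δ^2/2 + δ^3/3 + δ^4/4 := by
    rw [Finset.sum_range_succ, Finset.sum_range_succ, Finset.sum_range_succ,
      Finset.sum_range_succ, Finset.sum_range_zero]
    norm_num
  rw [hsum] at h
  have hb := (abs_le.mp h).1
  have hden : δ^5/(1-δ) ≤ 2*δ^5 := by
    rw [div_le_iff₀ (by linarith)]
    nlinarith [pow_pos h0 5]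
  linarith

lemma final_ineq (d : ℕ) (hd : 0 < d) (V ε c : ℝ) (hV : 0 < V) (hε : 0 < ε)
    (hc : 0 ≤ c) (hcd : c^d ≤ 5/2) :
    V * ((c * (ε/V))^d / d.factorial) ≤ 5/(2*(d.factorial:ℝ)) * ε^d / V^(d-1) := by
  have hfac : (0:ℝ) < d.factorial := by exact_mod_cast d.factorial_pos
  have hpow : V ^ (d-1) * V = V ^ d := by
    rw [← pow_succ, Nat.sub_add_cancel hd]
  have hX : (0:ℝ) ≤ ε^d/(V^(d-1)*d.factorial) := by positivity
  have e1 : V * ((c * (ε/V))^d / d.factorial) = c^d * (ε^d/(V^(d-1)*d.factorial)) := by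
    rw [mul_pow, div_pow]
    field_simp
    rw [← hpow]
    ring
  have e2 : 5/(2*(d.factorial:ℝ)) * ε^d / V^(d-1) = (5/2) * (ε^d/(V^(d-1)*d.factorial)) := by
    field_simp
  rw [e1, e2]
  exact mul_le_mul_of_nonneg_right hcd hX

/-- For `ε ∈ (0,1]` and `z ∈ [0,1]^d` with `V_z ≥ d·ε`,
`λ^d(A_ε(z)) ≤ (5/(2·d!))·ε^d/V_z^{d-1}`. -/
theorem stmt17 (d : ℕ) (hd : 0 < d) (ε : ℝ) (hε : ε ∈ Set.Ioc (0 : ℝ) 1)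
    (z : Fin d → ℝ) (hz : ∀ j, z j ∈ Set.Icc (0 : ℝ) 1) (hV : (d : ℝ) * ε ≤ starVol z) :
    volume (Aeps d ε z) ≤
      ENNReal.ofReal ((5 / (2 * (d.factorial : ℝ))) * ε ^ d / starVol z ^ (d - 1)) := by
  obtain ⟨hε0, hε1⟩ := hε
  have hd0 : (0:ℝ) < d := by exact_mod_cast hd
  have hVzdef : starVol z = ∏ j, z j := rfl
  set Vz := starVol z with hVzs
  have hVzpos : 0 < Vz := lt_of_lt_of_le (by positivity) hV
  have hzpos : ∀ j, 0 < z j := by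
    intro j
    rcases ((hz j).1).lt_or_eq with h | h
    · exact h
    · exfalso
      have hzero : Vz = 0 := by
        rw [hVzdef]
        exact Finset.prod_eq_zero (Finset.mem_univ j) h.symm
      linarith
  set δ := ε / Vz with hδ
  have hδ0 : 0 < δ := div_pos hε0 hVzpos
  have hδd : δ ≤ 1/(d:ℝ) := by
    rw [hδ, div_le_div_iff₀ hVzpos hd0]
    linarith
  obtain ⟨c, hc0, hcd, hkey⟩ : ∃ c : ℝ, 0 ≤ c ∧ c^d ≤ 5/2 ∧
      ∀ x ∈ Aeps d ε z, ∑ j, (1 - x j / z j) ≤ c * δ := by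
    rcases lt_or_ge d 2 with hd2 | hd2
    · -- d = 1
      have hd1 : d = 1 := by omega
      subst hd1
      refine ⟨5/2, by norm_num, by norm_num, ?_⟩
      rintro x ⟨hx01, hxz, hVx⟩
      have hz0 := hzpos 0
      have h1 : starVol z = z 0 := by simp [starVol]
      have h2 : starVol x = x 0 := by simp [starVol]
      have hzx : z 0 - x 0 ≤ ε := by rw [h1, h2] at hVx; exact hVx
      have hs1 : ∑ j : Fin 1, (1 - x j / z j) = 1 - x 0 / z 0 := by
        simp
      rw [hs1]
      have hs2 : 1 - x 0 / z 0 = (z 0 - x 0)/z 0 := by field_simp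
      rw [hs2]
      calc (z 0 - x 0)/z 0 ≤ ε / z 0 := by gcongr
        _ = δ := by rw [hδ, hVzs, h1]
        _ ≤ 5/2 * δ := by linarith
    · -- d ≥ 2
      have hd2' : (2:ℝ) ≤ d := by exact_mod_cast hd2
      have hud : 1/(d:ℝ) ≤ 1/2 := by
        rw [div_le_div_iff₀ hd0 (by norm_num)]; linarith
      have hδhalf : δ ≤ 1/2 := le_trans hδd hud
      set u := 1/(d:ℝ) with hu
      have hu0 : 0 < u := by positivity
      refine ⟨1 + u/2 + u^2/3 + u^3/4 + 2*u^4, by positivity, coeff_pow_le d hd2, ?_⟩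
      rintro x ⟨hx01, hxz, hVx⟩
      have hxz' : ∀ j, 0 ≤ x j / z j := fun j => div_nonneg (hx01 j).1 (hzpos j).le
      have hprod : 1 - δ ≤ ∏ j, (x j / z j) := by
        rw [Finset.prod_div_distrib]
        have h1 : Vz - ε ≤ ∏ j, x j := by
          have : starVol x = ∏ j, x j := rfl
          linarith [hVx, this]
        calc 1 - δ = (Vz - ε)/Vz := by rw [hδ]; field_simp
          _ ≤ (∏ j, x j)/(∏ j, z j) := by
              rw [← hVzdef]
              gcongr
      have hexp : ∏ j, (x j / z j) ≤ Real.exp (-∑ j, (1 - x j / z j)) := by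
        calc ∏ j, (x j / z j) ≤ ∏ j, Real.exp (-(1 - x j / z j)) := by
              refine Finset.prod_le_prod (fun j _ => hxz' j) (fun j _ => ?_)
              have h := Real.add_one_le_exp (-(1 - x j / z j))
              linarith
          _ = Real.exp (∑ j, -(1 - x j / z j)) := (Real.exp_sum _ _).symm
          _ = Real.exp (-∑ j, (1 - x j / z j)) := by rw [← Finset.sum_neg_distrib]
      have hlog1 : ∑ j, (1 - x j / z j) ≤ -Real.log (1 - δ) := by
        have hpos : (0:ℝ) < 1 - δ := by linarith
        have h1 : Real.log (1 - δ) ≤ -∑ j, (1 - x j / z j) := by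
          calc Real.log (1 - δ) ≤ Real.log (Real.exp (-∑ j, (1 - x j / z j))) :=
                Real.log_le_log hpos (le_trans hprod hexp)
            _ = -∑ j, (1 - x j / z j) := Real.log_exp _
        linarith
      have hlog2 := neg_log_le δ hδ0 hδhalf
      have hpow : ∀ n : ℕ, δ^(n+1) ≤ δ*u^n := by
        intro n
        have h1 : δ^n ≤ u^n := pow_le_pow_left₀ hδ0.le hδd n
        calc δ^(n+1) = δ * δ^n := by ring
          _ ≤ δ * u^n := mul_le_mul_of_nonneg_left h1 hδ0.le
      have hp2 := hpow 1
      have hp3 := hpow 2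
      have hp4 := hpow 3
      have hp5 := hpow 4
      norm_num at hp2 hp3 hp4 hp5
      have hre : (1 + u/2 + u^2/3 + u^3/4 + 2*u^4) * δ
          = δ + (δ*u)/2 + (δ*u^2)/3 + (δ*u^3)/4 + 2*(δ*u^4) := by ring
      calc ∑ j, (1 - x j / z j) ≤ -Real.log (1 - δ) := hlog1
        _ ≤ δ + δ^2/2 + δ^3/3 + δ^4/4 + 2*δ^5 := hlog2
        _ ≤ (1 + u/2 + u^2/3 + u^3/4 + 2*u^4) * δ := by
            rw [hre]; linarith
  -- volume estimate
  set T := c * δ with hTdef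
  have hT0 : 0 ≤ T := mul_nonneg hc0 hδ0.le
  set SS := {v : Fin d → ℝ | (∀ j, 0 ≤ v j) ∧ ∑ j, v j ≤ T} with hSS
  set f := Matrix.toLin' (Matrix.diagonal fun j => (z j)⁻¹) with hf
  set B := (fun w : Fin d → ℝ => (fun _ : Fin d => (1:ℝ)) - w) ⁻¹' SS with hB
  have happ : ∀ (x : Fin d → ℝ) (j : Fin d),
      ((fun _ : Fin d => (1:ℝ)) - f x) j = 1 - x j / z j := by
    intro x j
    simp [hf, Matrix.toLin'_apply, Matrix.mulVec_diagonal, inv_mul_eq_div]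
  have hsub : Aeps d ε z ⊆ f ⁻¹' B := by
    rintro x hx
    obtain ⟨hx01, hxz, hVx⟩ := hx
    simp only [Set.mem_preimage, hB, hSS, Set.mem_setOf_eq]
    constructor
    · intro j
      rw [happ x j]
      have hzj := hzpos j
      have hle : x j / z j ≤ 1 := by rw [div_le_one hzj]; exact hxz j
      linarith
    · have hsc : ∑ j, ((fun _ : Fin d => (1:ℝ)) - f x) j = ∑ j, (1 - x j / z j) :=
        Finset.sum_congr rfl fun j _ => happ x j
      rw [hsc]
      exact hkey x ⟨hx01, hxz, hVx⟩
  have hdet : LinearMap.det f = ∏ j, (z j)⁻¹ := by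
    rw [hf, LinearMap.det_toLin', Matrix.det_diagonal]
  have hdetne : LinearMap.det f ≠ 0 := by
    rw [hdet]
    exact Finset.prod_ne_zero_iff.mpr fun j _ => inv_ne_zero (hzpos j).ne'
  have habs : |(LinearMap.det f)⁻¹| = Vz := by
    rw [hdet, ← Finset.prod_inv_distrib]
    simp only [inv_inv]
    rw [← hVzdef]
    exact abs_of_pos hVzpos
  have hBvol : volume B = volume SS := by
    have h : B = Neg.neg ⁻¹' ((fun w : Fin d → ℝ => (fun _ : Fin d => (1:ℝ)) + w) ⁻¹' SS) := by
      ext w; simp [hB, sub_eq_add_neg]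
    rw [h, Measure.measure_preimage_neg, measure_preimage_add]
  calc volume (Aeps d ε z) ≤ volume (f ⁻¹' B) := measure_mono hsub
    _ = ENNReal.ofReal |(LinearMap.det f)⁻¹| * volume B :=
        Measure.addHaar_preimage_linearMap volume hdetne B
    _ = ENNReal.ofReal Vz * volume SS := by rw [habs, hBvol]
    _ ≤ ENNReal.ofReal Vz * ENNReal.ofReal (T^d / d.factorial) :=
        mul_le_mul_right (simplex_vol d T hT0) _
    _ = ENNReal.ofReal (Vz * (T^d / d.factorial)) := (ENNReal.ofReal_mul hVzpos.le).symm
    _ ≤ ENNReal.ofReal ((5 / (2 * (d.factorial : ℝ))) * ε ^ d / Vz ^ (d - 1)) := by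
        apply ENNReal.ofReal_le_ofReal
        have := final_ineq d hd Vz ε c hVzpos hε0 hc0 hcd
        rw [hTdef, hδ]
        exact this
end
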